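/- If Q_i and Q_j can each be decomposed into paths of length k, then Q_{i+j} can be decomposed into paths of length k. -/

import Mathlib

/-- The `n`-dimensional hypercube graph on `{0,1}^n`: two vertices are adjacent
iff they differ in exactly one coordinate. -/
def Q (n : ℕ) : SimpleGraph (Fin n → ZMod 2) where
  Adj x y := hammingDist x y = 1
  symm := ⟨fun x y h => by simpa [hammingDist_comm] using h⟩
  loopless := ⟨fun x h => by simp [hammingDist_self] at h⟩

/-- A decomposition of a graph `G` into paths of length `k`: a family of paths,
each with `k` edges, such that every edge of `G` lies in exactly one of them. -/
def PathDecomp {V : Type*} (G : SimpleGraph V) (k : ℕ) : Prop :=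
  ∃ (ι : Type) (u v : ι → V) (w : ∀ i : ι, G.Walk (u i) (v i)),
    (∀ i, (w i).IsPath ∧ (w i).length = k) ∧
    ∀ e ∈ G.edgeSet, ∃! i, e ∈ (w i).edges

lemma hammingDist_append {m n : ℕ} (a c : Fin m → ZMod 2) (b d : Fin n → ZMod 2) :
    hammingDist (Fin.append a b) (Fin.append c d) = hammingDist a c + hammingDist b d := by
  classical
  simp only [hammingDist, Finset.card_filter]
  rw [Fin.sum_univ_add]
  simp [Fin.append_left, Fin.append_right]

def Lp {m n : ℕ} (f : Fin (m+n) → ZMod 2) : Fin m → ZMod 2 := f ∘ Fin.castAdd n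
def Rp {m n : ℕ} (f : Fin (m+n) → ZMod 2) : Fin n → ZMod 2 := f ∘ Fin.natAdd m

lemma append_Lp_Rp {m n : ℕ} (f : Fin (m+n) → ZMod 2) : Fin.append (Lp f) (Rp f) = f :=
  Fin.append_castAdd_natAdd (f := f)

lemma Lp_append {m n : ℕ} (a : Fin m → ZMod 2) (b : Fin n → ZMod 2) : Lp (Fin.append a b) = a := by
  funext x; simp [Lp, Fin.append_left]

lemma Rp_append {m n : ℕ} (a : Fin m → ZMod 2) (b : Fin n → ZMod 2) : Rp (Fin.append a b) = b := by
  funext x; simp [Rp, Fin.append_right]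

def homL (m n : ℕ) (y : Fin n → ZMod 2) : Q m →g Q (m + n) where
  toFun x := Fin.append x y
  map_rel' := by
    intro a b h
    show hammingDist _ _ = 1
    rw [hammingDist_append]
    have h' : hammingDist a b = 1 := h
    simp [h']

def homR (m n : ℕ) (x : Fin m → ZMod 2) : Q n →g Q (m + n) where
  toFun y := Fin.append x y
  map_rel' := by
    intro a b h
    show hammingDist _ _ = 1
    rw [hammingDist_append]
    have h' : hammingDist a b = 1 := h
    simp [h']

@[simp] lemma homL_apply (m n : ℕ) (y : Fin n → ZMod 2) (x : Fin m → ZMod 2) :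
    homL m n y x = Fin.append x y := rfl

@[simp] lemma homR_apply (m n : ℕ) (x : Fin m → ZMod 2) (y : Fin n → ZMod 2) :
    homR m n x y = Fin.append x y := rfl

lemma homL_inj (m n : ℕ) (y : Fin n → ZMod 2) : Function.Injective (homL m n y) := by
  intro a b h
  have h2 : Fin.append a y = Fin.append b y := h
  have := congrArg Lp h2
  simpa [Lp_append] using this

lemma homR_inj (m n : ℕ) (x : Fin m → ZMod 2) : Function.Injective (homR m n x) := by
  intro a b h
  have h2 : Fin.append x a = Fin.append x b := h
  have := congrArg (Rp (m := m)) h2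
  simpa [Rp_append] using this

lemma mem_edges_mapL {m n : ℕ} (y : Fin n → ZMod 2) {u v : Fin m → ZMod 2}
    (p : (Q m).Walk u v) (f g : Fin (m+n) → ZMod 2) :
    s(f, g) ∈ (p.map (homL m n y)).edges ↔
      Rp f = y ∧ Rp g = y ∧ s(Lp f, Lp g) ∈ p.edges := by
  rw [SimpleGraph.Walk.edges_map, List.mem_map]
  constructor
  · rintro ⟨e, he, hmap⟩
    induction e with
    | _ a b =>
      simp only [Sym2.map_pair_eq, Sym2.eq, Sym2.rel_iff', Prod.mk.injEq,
        Prod.swap_prod_mk] at hmap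
      rcases hmap with ⟨h1, h2⟩ | ⟨h1, h2⟩ <;> subst h1 <;> subst h2 <;>
        refine ⟨?_, ?_, ?_⟩ <;>
        simp [homL_apply, Rp_append, Lp_append, he, Sym2.eq_swap]
  · rintro ⟨h1, h2, h3⟩
    refine ⟨s(Lp f, Lp g), h3, ?_⟩
    have hf : (homL m n y) (Lp f) = f := by
      show Fin.append (Lp f) y = f
      rw [← h1, append_Lp_Rp]
    have hg : (homL m n y) (Lp g) = g := by
      show Fin.append (Lp g) y = g
      rw [← h2, append_Lp_Rp]
    simp only [Sym2.map_pair_eq, Sym2.eq, Sym2.rel_iff', Prod.mk.injEq, Prod.swap_prod_mk]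
    exact Or.inl ⟨hf, hg⟩

lemma mem_edges_mapR {m n : ℕ} (x : Fin m → ZMod 2) {u v : Fin n → ZMod 2}
    (p : (Q n).Walk u v) (f g : Fin (m+n) → ZMod 2) :
    s(f, g) ∈ (p.map (homR m n x)).edges ↔
      Lp f = x ∧ Lp g = x ∧ s(Rp f, Rp g) ∈ p.edges := by
  rw [SimpleGraph.Walk.edges_map, List.mem_map]
  constructor
  · rintro ⟨e, he, hmap⟩
    induction e with
    | _ a b =>
      simp only [Sym2.map_pair_eq, Sym2.eq, Sym2.rel_iff', Prod.mk.injEq,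
        Prod.swap_prod_mk] at hmap
      rcases hmap with ⟨h1, h2⟩ | ⟨h1, h2⟩ <;> subst h1 <;> subst h2 <;>
        refine ⟨?_, ?_, ?_⟩ <;>
        simp [homR_apply, Rp_append, Lp_append, he, Sym2.eq_swap]
  · rintro ⟨h1, h2, h3⟩
    refine ⟨s(Rp f, Rp g), h3, ?_⟩
    have hf : (homR m n x) (Rp f) = f := by
      show Fin.append x (Rp f) = f
      rw [← h1, append_Lp_Rp]
    have hg : (homR m n x) (Rp g) = g := by
      show Fin.append x (Rp g) = g
      rw [← h2, append_Lp_Rp]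
    simp only [Sym2.map_pair_eq, Sym2.eq, Sym2.rel_iff', Prod.mk.injEq, Prod.swap_prod_mk]
    exact Or.inl ⟨hf, hg⟩

theorem decomp_add (i j k : ℕ) (hi : PathDecomp (Q i) k) (hj : PathDecomp (Q j) k) :
    PathDecomp (Q (i + j)) k := by
  obtain ⟨ι₁, u₁, v₁, w₁, hp₁, he₁⟩ := hi
  obtain ⟨ι₂, u₂, v₂, w₂, hp₂, he₂⟩ := hj
  refine ⟨(ι₁ × (Fin j → ZMod 2)) ⊕ (ι₂ × (Fin i → ZMod 2)),
    (fun t => match t with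
      | .inl (t, y) => Fin.append (u₁ t) y
      | .inr (t, x) => Fin.append x (u₂ t)),
    (fun t => match t with
      | .inl (t, y) => Fin.append (v₁ t) y
      | .inr (t, x) => Fin.append x (v₂ t)),
    (fun t => match t with
      | .inl (t, y) => (w₁ t).map (homL i j y)
      | .inr (t, x) => (w₂ t).map (homR i j x)), ?_, ?_⟩
  · rintro (⟨t, y⟩ | ⟨t, x⟩)
    · exact ⟨SimpleGraph.Walk.map_isPath_of_injective (homL_inj i j y) (hp₁ t).1, (SimpleGraph.Walk.length_map _ _).trans (hp₁ t).2⟩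
    · exact ⟨SimpleGraph.Walk.map_isPath_of_injective (homR_inj i j x) (hp₂ t).1, (SimpleGraph.Walk.length_map _ _).trans (hp₂ t).2⟩
  · intro e he
    induction e with
    | _ f g =>
      rw [SimpleGraph.mem_edgeSet] at he
      have hadj : hammingDist f g = 1 := he
      have hsplit : hammingDist (Lp f) (Lp g) + hammingDist (Rp f) (Rp g) = 1 := by
        rw [← hammingDist_append, append_Lp_Rp, append_Lp_Rp]; exact hadj
      rcases Nat.add_eq_one_iff.mp hsplit with ⟨hL, hR⟩ | ⟨hL, hR⟩
      · -- right parts differ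
        have hLfg : Lp f = Lp g := eq_of_hammingDist_eq_zero hL
        have hQj : s((Rp f : Fin j → ZMod 2), Rp g) ∈ (Q j).edgeSet := hR
        obtain ⟨t, ht, hun⟩ := he₂ _ hQj
        refine ⟨Sum.inr (t, Lp f), ?_, ?_⟩
        · exact (mem_edges_mapR _ _ f g).mpr ⟨rfl, hLfg.symm, ht⟩
        · rintro (⟨t', y'⟩ | ⟨t', x'⟩) hmem
          · replace hmem := (mem_edges_mapL _ _ f g).mp hmem
            obtain ⟨_, _, hm⟩ := hmem
            have : (Q i).Adj (Lp f) (Lp g) := (w₁ t').edges_subset_edgeSet hm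
            rw [hLfg] at this
            exact absurd this ((Q i).loopless.irrefl _)
          · replace hmem := (mem_edges_mapR _ _ f g).mp hmem
            obtain ⟨hx1, _, hm⟩ := hmem
            rw [← hx1, hun t' hm]
      · -- left parts differ
        have hRfg : Rp f = Rp g := by exact eq_of_hammingDist_eq_zero hR
        have hQi : s((Lp f : Fin i → ZMod 2), Lp g) ∈ (Q i).edgeSet := hL
        obtain ⟨t, ht, hun⟩ := he₁ _ hQi
        refine ⟨Sum.inl (t, Rp f), ?_, ?_⟩
        · exact (mem_edges_mapL _ _ f g).mpr ⟨rfl, hRfg.symm, ht⟩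
        · rintro (⟨t', y'⟩ | ⟨t', x'⟩) hmem
          · replace hmem := (mem_edges_mapL _ _ f g).mp hmem
            obtain ⟨hy1, _, hm⟩ := hmem
            rw [← hy1, hun t' hm]
          · replace hmem := (mem_edges_mapR _ _ f g).mp hmem
            obtain ⟨_, _, hm⟩ := hmem
            have : (Q j).Adj (Rp f) (Rp g) := (w₂ t').edges_subset_edgeSet hm
            rw [hRfg] at this
            exact absurd this ((Q j).loopless.irrefl _)
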